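/- Let M be a real antisymmetric n×n matrix with X(π) = Σ_{1≤i<j≤n} M_{π(i),π(j)} and Var(X) > 0 (variance over uniform π ∈ S_n). Then, averaging over uniform π ∈ S_n and uniform I ∈ {1,…,n}, E[(X(π∘c_I) − X(π))²] = (4/n)·Var(X); equivalently, for W = X/√Var(X) and W' = X(π∘c_I)/√Var(X), E(W' − W)² = 4/n. -/
import Mathlib


/-- The cycle `c_i` on `Fin n` mapping `i → i+1 → ⋯ → n-1 → i` and fixing `0,…,i-1`
(0-indexed version of the cycle on `{1,…,n}` mapping `i → i+1 → ⋯ → n → i`). -/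
def cyc {n : ℕ} (i : Fin n) : Equiv.Perm (Fin n) :=
  (Fin.revPerm.trans ((Fin.cycleRange i.rev).trans Fin.revPerm)).symm

/-- The number of descents of a permutation of `Fin n`: the number of indices `i`
with `i+1 < n` and `π(i) > π(i+1)`. -/
def descents {n : ℕ} (π : Equiv.Perm (Fin n)) : ℕ :=
  (Finset.univ.filter fun i : Fin (n - 1) =>
    π ⟨i.1 + 1, by have := i.2; omega⟩ < π ⟨i.1, by have := i.2; omega⟩).card

/-- The number of inversions of a permutation of `Fin n`: the number of pairs
`i < j` with `π(i) > π(j)`. -/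
def inversions {n : ℕ} (π : Equiv.Perm (Fin n)) : ℕ :=
  (Finset.univ.filter fun p : Fin n × Fin n => p.1 < p.2 ∧ π p.2 < π p.1).card

/-- `X(π) = ∑_{i<j} M_{π(i),π(j)}`. -/
def Xstat {n : ℕ} (M : Fin n → Fin n → ℝ) (π : Equiv.Perm (Fin n)) : ℝ :=
  ∑ p ∈ Finset.univ.filter (fun p : Fin n × Fin n => p.1 < p.2), M (π p.1) (π p.2)

/-- Expectation of a statistic under the uniform measure on the symmetric group. -/
noncomputable def permExp {n : ℕ} (f : Equiv.Perm (Fin n) → ℝ) : ℝ :=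
  (∑ π : Equiv.Perm (Fin n), f π) / (n.factorial : ℝ)

/-- Variance of a statistic under the uniform measure on the symmetric group. -/
noncomputable def permVar {n : ℕ} (f : Equiv.Perm (Fin n) → ℝ) : ℝ :=
  permExp (fun π => (f π - permExp f) ^ 2)

lemma cyc_inv_apply {n : ℕ} (i x : Fin n) :
    (cyc i)⁻¹ x = (Fin.cycleRange i.rev x.rev).rev := rfl

lemma cycleRange_lt_cycleRange_iff {m : ℕ} (r u v : Fin (m+1)) (huv : u < v) :
    r.cycleRange v < r.cycleRange u ↔ v = r ∧ u < r := by
  rcases lt_trichotomy v r with hv | hv | hv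
  · have hu : u < r := huv.trans hv
    refine iff_of_false ?_ (by simp [hv.ne])
    rw [Fin.lt_def, Fin.coe_cycleRange_of_lt hv, Fin.coe_cycleRange_of_lt hu]
    have := Fin.lt_def.mp huv
    omega
  · subst hv
    rw [Fin.cycleRange_self]
    refine iff_of_true ?_ ⟨rfl, huv⟩
    rw [Fin.lt_def, Fin.coe_cycleRange_of_lt huv]
    simp
  · rw [Fin.cycleRange_of_gt hv]
    refine iff_of_false ?_ (by simp [hv.ne'])
    rcases lt_trichotomy u r with hu | hu | hu
    · rw [Fin.lt_def, Fin.coe_cycleRange_of_lt hu]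
      have h1 := Fin.lt_def.mp hu
      have h2 := Fin.lt_def.mp hv
      omega
    · subst hu
      rw [Fin.cycleRange_self]
      simp [Fin.lt_def]
    · rw [Fin.cycleRange_of_gt hu]
      exact not_lt.mpr huv.le

lemma cyc_inv_lt_iff {n : ℕ} (i a b : Fin n) (hab : a < b) :
    (cyc i)⁻¹ b < (cyc i)⁻¹ a ↔ a = i ∧ i < b := by
  have hn : n ≠ 0 := by rintro rfl; exact i.elim0
  obtain ⟨m, rfl⟩ := Nat.exists_eq_succ_of_ne_zero hn
  rw [cyc_inv_apply, cyc_inv_apply, Fin.rev_lt_rev]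
  rw [cycleRange_lt_cycleRange_iff i.rev b.rev a.rev (Fin.rev_lt_rev.mpr hab)]
  rw [Fin.rev_inj, Fin.rev_lt_rev]

/-- `T_i(π) = ∑_{j>i} M(π i, π j)`. -/
def Tsum {n : ℕ} (M : Fin n → Fin n → ℝ) (i : Fin n) (π : Equiv.Perm (Fin n)) : ℝ :=
  ∑ j ∈ Finset.univ.filter (fun j => i < j), M (π i) (π j)

lemma Xstat_mul_cyc {n : ℕ} (M : Fin n → Fin n → ℝ) (hM : ∀ i j, M j i = - M i j)
    (π : Equiv.Perm (Fin n)) (i : Fin n) :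
    Xstat M (π * cyc i) = Xstat M π - 2 * Tsum M i π := by
  classical
  set c := cyc i with hc
  set f : Fin n × Fin n → ℝ := fun q => M (π q.1) (π q.2) with hf
  have hXc : Xstat M (π * c) =
      ∑ q ∈ Finset.univ.filter (fun q : Fin n × Fin n => c⁻¹ q.1 < c⁻¹ q.2), f q := by
    rw [Xstat]
    refine Finset.sum_equiv (c.prodCongr c) ?_ ?_
    · intro q
      simp [Equiv.prodCongr]
    · intro q _
      simp [Equiv.prodCongr, f, Equiv.Perm.mul_apply]
  -- split sums
  have hsplit : ∀ p p' : Fin n × Fin n → Prop, ∀ inst : DecidablePred p, ∀ inst' : DecidablePred p',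
      ∑ q ∈ Finset.univ.filter p, f q =
        ∑ q ∈ Finset.univ.filter (fun q => p q ∧ p' q), f q
        + ∑ q ∈ Finset.univ.filter (fun q => p q ∧ ¬ p' q), f q := by
    intro p p' _ _
    rw [← Finset.sum_filter_add_sum_filter_not (Finset.univ.filter p) p' f,
      Finset.filter_filter, Finset.filter_filter]
  have h1 := hsplit (fun q => q.1 < q.2) (fun q => c⁻¹ q.1 < c⁻¹ q.2)
    (fun _ => inferInstance) (fun _ => inferInstance)
  have h2 := hsplit (fun q => c⁻¹ q.1 < c⁻¹ q.2) (fun q => q.1 < q.2)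
    (fun _ => inferInstance) (fun _ => inferInstance)
  -- the two "agree" sets are equal
  have hAA : (Finset.univ.filter fun q : Fin n × Fin n => c⁻¹ q.1 < c⁻¹ q.2 ∧ q.1 < q.2)
      = Finset.univ.filter fun q : Fin n × Fin n => q.1 < q.2 ∧ c⁻¹ q.1 < c⁻¹ q.2 := by
    apply Finset.filter_congr; intro q _; exact and_comm
  -- the two "disagree" sums are opposite
  have hswap : ∑ q ∈ Finset.univ.filter
        (fun q : Fin n × Fin n => c⁻¹ q.1 < c⁻¹ q.2 ∧ ¬ q.1 < q.2), f q
      = - ∑ q ∈ Finset.univ.filter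
        (fun q : Fin n × Fin n => q.1 < q.2 ∧ ¬ c⁻¹ q.1 < c⁻¹ q.2), f q := by
    rw [← Finset.sum_neg_distrib]
    refine Finset.sum_nbij' (fun q => (q.2, q.1)) (fun q => (q.2, q.1)) ?_ ?_ ?_ ?_ ?_
    · intro q hq
      simp only [Finset.mem_filter, Finset.mem_univ, true_and] at hq ⊢
      have hne : q.2 < q.1 := lt_of_le_of_ne (not_lt.mp hq.2) (fun h => by
        rw [h] at hq; exact lt_irrefl _ hq.1)
      exact ⟨hne, not_lt.mpr hq.1.le⟩
    · intro q hq
      simp only [Finset.mem_filter, Finset.mem_univ, true_and] at hq ⊢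
      have : c⁻¹ q.2 ≠ c⁻¹ q.1 := fun h => by
        have := (EquivLike.injective c⁻¹) h
        rw [this] at hq; exact lt_irrefl _ hq.1
      exact ⟨lt_of_le_of_ne (not_lt.mp hq.2) this, not_lt.mpr hq.1.le⟩
    · intro q _; rfl
    · intro q _; rfl
    · intro q _
      exact hM (π q.2) (π q.1)
  -- identify the disagree set with {i} × {j > i}
  have hD : (Finset.univ.filter
        (fun q : Fin n × Fin n => q.1 < q.2 ∧ ¬ c⁻¹ q.1 < c⁻¹ q.2))
      = Finset.univ.filter (fun q : Fin n × Fin n => q.1 = i ∧ i < q.2) := by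
    ext q
    simp only [Finset.mem_filter, Finset.mem_univ, true_and]
    constructor
    · rintro ⟨h1, h2⟩
      have hne : c⁻¹ q.2 ≠ c⁻¹ q.1 := fun h => by
        have := (EquivLike.injective c⁻¹) h
        rw [this] at h1; exact lt_irrefl _ h1
      have : c⁻¹ q.2 < c⁻¹ q.1 := lt_of_le_of_ne (not_lt.mp h2) hne
      exact (cyc_inv_lt_iff i q.1 q.2 h1).mp this
    · rintro ⟨h1, h2⟩
      have hlt : q.1 < q.2 := h1 ▸ h2
      exact ⟨hlt, not_lt.mpr ((cyc_inv_lt_iff i q.1 q.2 hlt).mpr ⟨h1, h2⟩).le⟩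
  have hTD : ∑ q ∈ Finset.univ.filter
        (fun q : Fin n × Fin n => q.1 < q.2 ∧ ¬ c⁻¹ q.1 < c⁻¹ q.2), f q = Tsum M i π := by
    rw [hD, Tsum]
    refine Finset.sum_nbij' (fun q => q.2) (fun j => (i, j)) ?_ ?_ ?_ ?_ ?_
    · intro q hq; simp only [Finset.mem_filter, Finset.mem_univ, true_and] at hq ⊢; exact hq.2
    · intro j hj
      rw [Finset.mem_filter] at hj ⊢
      exact ⟨Finset.mem_univ _, rfl, hj.2⟩
    · intro q hq; simp only [Finset.mem_filter, Finset.mem_univ, true_and] at hq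
      exact Prod.ext hq.1.symm rfl
    · intro j _; rfl
    · intro q hq; simp only [Finset.mem_filter, Finset.mem_univ, true_and] at hq
      simp only [f, hq.1]
  have hXp : Xstat M π = ∑ q ∈ Finset.univ.filter (fun q : Fin n × Fin n => q.1 < q.2), f q := rfl
  rw [hXc, h2, hAA, hswap, hTD, hXp, h1, hTD]
  ring

lemma sum_perm_mul {n : ℕ} (f : Equiv.Perm (Fin n) → ℝ) (g : Equiv.Perm (Fin n)) :
    ∑ π : Equiv.Perm (Fin n), f (π * g) = ∑ π : Equiv.Perm (Fin n), f π :=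
  Equiv.sum_comp (Equiv.mulRight g) f

lemma C2 {n : ℕ} (M : Fin n → Fin n → ℝ) (hM : ∀ i j, M j i = - M i j)
    {a b : Fin n} (hab : a ≠ b) :
    ∑ π : Equiv.Perm (Fin n), M (π a) (π b) = 0 := by
  have h := sum_perm_mul (fun π => M (π a) (π b)) (Equiv.swap a b)
  simp only [Equiv.Perm.mul_apply, Equiv.swap_apply_left, Equiv.swap_apply_right] at h
  have h2 : ∑ π : Equiv.Perm (Fin n), M (π b) (π a)
      = - ∑ π : Equiv.Perm (Fin n), M (π a) (π b) := by
    rw [← Finset.sum_neg_distrib]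
    exact Finset.sum_congr rfl fun π _ => hM (π a) (π b)
  rw [h2] at h
  linarith

lemma C4 {n : ℕ} (M : Fin n → Fin n → ℝ) (hM : ∀ i j, M j i = - M i j)
    {a b c d : Fin n} (hac : a ≠ c) (had : a ≠ d) (hbc : b ≠ c) (hbd : b ≠ d) (hcd : c ≠ d) :
    ∑ π : Equiv.Perm (Fin n), M (π a) (π b) * M (π c) (π d) = 0 := by
  have h := sum_perm_mul (fun π => M (π a) (π b) * M (π c) (π d)) (Equiv.swap c d)
  simp only [Equiv.Perm.mul_apply, Equiv.swap_apply_left, Equiv.swap_apply_right,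
    Equiv.swap_apply_of_ne_of_ne hac had, Equiv.swap_apply_of_ne_of_ne hbc hbd] at h
  have h2 : ∑ π : Equiv.Perm (Fin n), M (π a) (π b) * M (π d) (π c)
      = - ∑ π : Equiv.Perm (Fin n), M (π a) (π b) * M (π c) (π d) := by
    rw [← Finset.sum_neg_distrib]
    refine Finset.sum_congr rfl fun π _ => ?_
    rw [hM (π c) (π d)]; ring
  rw [h2] at h
  linarith

lemma C3 {n : ℕ} (M : Fin n → Fin n → ℝ) (hM : ∀ i j, M j i = - M i j)
    {a b c : Fin n} (hab : a ≠ b) (hac : a ≠ c) (hbc : b ≠ c) :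
    ∑ π : Equiv.Perm (Fin n), M (π a) (π b) * M (π b) (π c)
      + ∑ π : Equiv.Perm (Fin n), M (π a) (π c) * M (π b) (π c) = 0 := by
  have h := sum_perm_mul (fun π => M (π a) (π b) * M (π b) (π c)) (Equiv.swap b c)
  simp only [Equiv.Perm.mul_apply, Equiv.swap_apply_left, Equiv.swap_apply_right,
    Equiv.swap_apply_of_ne_of_ne hab hac] at h
  have h2 : ∑ π : Equiv.Perm (Fin n), M (π a) (π c) * M (π c) (π b)
      = - ∑ π : Equiv.Perm (Fin n), M (π a) (π c) * M (π b) (π c) := by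
    rw [← Finset.sum_neg_distrib]
    refine Finset.sum_congr rfl fun π _ => ?_
    rw [hM (π b) (π c)]; ring
  rw [h2] at h
  linarith

lemma cross {n : ℕ} (M : Fin n → Fin n → ℝ) (hM : ∀ i j, M j i = - M i j)
    {i i' : Fin n} (hii : i < i') :
    ∑ π : Equiv.Perm (Fin n), Tsum M i π * Tsum M i' π = 0 := by
  classical
  set J := Finset.univ.filter (fun j : Fin n => i < j) with hJ
  set K := Finset.univ.filter (fun j : Fin n => i' < j) with hK
  set g : Fin n → Fin n → ℝ :=
    fun j k => ∑ π : Equiv.Perm (Fin n), M (π i) (π j) * M (π i') (π k) with hg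
  have expand : ∑ π : Equiv.Perm (Fin n), Tsum M i π * Tsum M i' π
      = ∑ j ∈ J, ∑ k ∈ K, g j k := by
    calc ∑ π : Equiv.Perm (Fin n), Tsum M i π * Tsum M i' π
        = ∑ π : Equiv.Perm (Fin n), ∑ j ∈ J, ∑ k ∈ K, M (π i) (π j) * M (π i') (π k) :=
          Finset.sum_congr rfl fun π _ => by rw [Tsum, Tsum, Finset.sum_mul_sum]
      _ = ∑ j ∈ J, ∑ π : Equiv.Perm (Fin n), ∑ k ∈ K, M (π i) (π j) * M (π i') (π k) :=
          Finset.sum_comm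
      _ = ∑ j ∈ J, ∑ k ∈ K, g j k := Finset.sum_congr rfl fun j _ => Finset.sum_comm
  rw [expand]
  have hi'J : i' ∈ J := by simp [hJ, hii]
  have hKmem : ∀ k, k ∈ K ↔ i' < k := by intro k; simp [hK]
  have hrow0 : ∀ j ∈ J, j ≠ i' → ∀ k ∈ K, k ≠ j → g j k = 0 := by
    intro j hj hji' k hk hkj
    have hik : i < k := hii.trans ((hKmem k).mp hk)
    exact C4 M hM hii.ne hik.ne hji' hkj.symm ((hKmem k).mp hk).ne
  rw [← Finset.add_sum_erase J _ hi'J]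
  have hrows : ∀ j ∈ J.erase i', (∑ k ∈ K, g j k) = if j ∈ K then g j j else 0 := by
    intro j hj
    obtain ⟨hne, hjJ⟩ := Finset.mem_erase.mp hj
    have : ∀ k ∈ K, g j k = if k = j then g j j else 0 := by
      intro k hk
      by_cases h : k = j
      · subst h; simp
      · rw [if_neg h]; exact hrow0 j hjJ hne k hk h
    rw [Finset.sum_congr rfl this, Finset.sum_ite_eq' K j (fun _ => g j j)]
  rw [Finset.sum_congr rfl hrows, ← Finset.sum_filter]
  have hfilter : (J.erase i').filter (· ∈ K) = K := by
    ext k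
    constructor
    · intro h; exact (Finset.mem_filter.mp h).2
    · intro hk
      have hik := (hKmem k).mp hk
      refine Finset.mem_filter.mpr ⟨Finset.mem_erase.mpr ⟨hik.ne', ?_⟩, hk⟩
      simp [hJ, hii.trans hik]
  rw [hfilter, ← Finset.sum_add_distrib]
  refine Finset.sum_eq_zero fun k hk => ?_
  have hik : i < k := hii.trans ((hKmem k).mp hk)
  exact C3 M hM hii.ne hik.ne ((hKmem k).mp hk).ne

lemma sum_Tsum {n : ℕ} (M : Fin n → Fin n → ℝ) (π : Equiv.Perm (Fin n)) :
    ∑ i : Fin n, Tsum M i π = Xstat M π := by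
  rw [Xstat, Finset.sum_filter, Fintype.sum_prod_type]
  exact Finset.sum_congr rfl fun i _ => by rw [Tsum, Finset.sum_filter]

lemma exp_zero {n : ℕ} (M : Fin n → Fin n → ℝ) (hM : ∀ i j, M j i = - M i j) :
    ∑ π : Equiv.Perm (Fin n), Xstat M π = 0 := by
  have h : ∑ π : Equiv.Perm (Fin n), Xstat M π
      = ∑ q ∈ Finset.univ.filter (fun p : Fin n × Fin n => p.1 < p.2),
          ∑ π : Equiv.Perm (Fin n), M (π q.1) (π q.2) := Finset.sum_comm
  rw [h]
  refine Finset.sum_eq_zero fun q hq => ?_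
  exact C2 M hM (Finset.mem_filter.mp hq).2.ne

lemma cross' {n : ℕ} (M : Fin n → Fin n → ℝ) (hM : ∀ i j, M j i = - M i j)
    {i i' : Fin n} (hii : i ≠ i') :
    ∑ π : Equiv.Perm (Fin n), Tsum M i π * Tsum M i' π = 0 := by
  rcases lt_or_gt_of_ne hii with h | h
  · exact cross M hM h
  · rw [← cross M hM h]
    exact Finset.sum_congr rfl fun π _ => mul_comm _ _

lemma sum_sq {n : ℕ} (M : Fin n → Fin n → ℝ) (hM : ∀ i j, M j i = - M i j) :
    ∑ π : Equiv.Perm (Fin n), (Xstat M π) ^ 2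
      = ∑ π : Equiv.Perm (Fin n), ∑ i : Fin n, (Tsum M i π) ^ 2 := by
  have h1 : ∀ π : Equiv.Perm (Fin n), (Xstat M π) ^ 2
      = ∑ i : Fin n, ∑ i' : Fin n, Tsum M i π * Tsum M i' π := by
    intro π
    rw [← sum_Tsum M π, sq, Finset.sum_mul_sum]
  calc ∑ π : Equiv.Perm (Fin n), (Xstat M π) ^ 2
      = ∑ i : Fin n, ∑ π : Equiv.Perm (Fin n), ∑ i' : Fin n, Tsum M i π * Tsum M i' π := by
        rw [← Finset.sum_comm]
        exact Finset.sum_congr rfl fun π _ => h1 π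
    _ = ∑ i : Fin n, ∑ i' : Fin n, ∑ π : Equiv.Perm (Fin n), Tsum M i π * Tsum M i' π :=
        Finset.sum_congr rfl fun i _ => Finset.sum_comm
    _ = ∑ i : Fin n, ∑ π : Equiv.Perm (Fin n), (Tsum M i π) ^ 2 := by
        refine Finset.sum_congr rfl fun i _ => ?_
        rw [Finset.sum_eq_single i (fun i' _ hne => cross' M hM (Ne.symm hne))
          (fun h => absurd (Finset.mem_univ i) h)]
        exact Finset.sum_congr rfl fun π _ => (sq _).symm
    _ = ∑ π : Equiv.Perm (Fin n), ∑ i : Fin n, (Tsum M i π) ^ 2 := Finset.sum_comm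

/-- For an antisymmetric matrix `M` with `Var(X) > 0`, averaging over
uniform `π ∈ S_n` and uniform `I ∈ {1,…,n}`,
`E[(X(π∘c_I) − X(π))²] = (4/n)·Var(X)`; equivalently `E(W' − W)² = 4/n`. -/
theorem expect_sq_diff {n : ℕ} (M : Fin n → Fin n → ℝ)
    (hM : ∀ i j, M j i = - M i j) (hvar : 0 < permVar (Xstat M)) :
    (∑ π : Equiv.Perm (Fin n), ∑ i : Fin n, (Xstat M (π * cyc i) - Xstat M π) ^ 2)
        / ((n.factorial : ℝ) * (n : ℝ))
      = (4 / (n : ℝ)) * permVar (Xstat M) := by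
  rcases n with _ | m
  · simp
  have hfac : (((m+1).factorial : ℕ) : ℝ) ≠ 0 := Nat.cast_ne_zero.mpr (m+1).factorial_ne_zero
  have hn : (((m+1) : ℕ) : ℝ) ≠ 0 := Nat.cast_ne_zero.mpr (Nat.succ_ne_zero m)
  have hnum : ∑ π : Equiv.Perm (Fin (m+1)), ∑ i : Fin (m+1),
        (Xstat M (π * cyc i) - Xstat M π) ^ 2
      = 4 * ∑ π : Equiv.Perm (Fin (m+1)), (Xstat M π) ^ 2 := by
    rw [sum_sq M hM, Finset.mul_sum]
    refine Finset.sum_congr rfl fun π _ => ?_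
    rw [Finset.mul_sum]
    refine Finset.sum_congr rfl fun i _ => ?_
    rw [Xstat_mul_cyc M hM π i]
    ring
  have hE : permExp (Xstat M) = 0 := by rw [permExp, exp_zero M hM, zero_div]
  have hV : permVar (Xstat M)
      = (∑ π : Equiv.Perm (Fin (m+1)), (Xstat M π) ^ 2) / ((m+1).factorial : ℝ) := by
    rw [permVar, hE, permExp]
    simp
  rw [hnum, hV]
  ring
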